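/- Let U_l and U be two n×r real matrices with orthonormal columns. Then there exists an r×r orthogonal matrix Q such that ‖U_l − U Q‖_F ≤ ‖U_l U_lᵀ − U Uᵀ‖_F. -/

import Mathlib

open Matrix

/-- The Frobenius norm of a real matrix. -/
noncomputable def frobNorm {m n : ℕ} (A : Matrix (Fin m) (Fin n) ℝ) : ℝ :=
  Real.sqrt (∑ i, ∑ j, (A i j) ^ 2)

lemma frobNorm_eq_sqrt_trace {m n : ℕ} (A : Matrix (Fin m) (Fin n) ℝ) :
    frobNorm A = Real.sqrt ((Aᵀ * A).trace) := by
  rw [frobNorm, Matrix.trace, Finset.sum_comm]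
  simp [Matrix.diag, Matrix.mul_apply, pow_two]

lemma qform {m k : ℕ} (A : Matrix (Fin m) (Fin k) ℝ) (x : Fin k → ℝ) :
    x ⬝ᵥ ((Aᵀ * A) *ᵥ x) = (A *ᵥ x) ⬝ᵥ (A *ᵥ x) := by
  rw [← Matrix.mulVec_mulVec, Matrix.dotProduct_mulVec, Matrix.vecMul_transpose]

lemma dot_sq_le {k : ℕ} (a b : Fin k → ℝ) : (a ⬝ᵥ b) ^ 2 ≤ (a ⬝ᵥ a) * (b ⬝ᵥ b) := by
  simpa [dotProduct, pow_two] using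
    Finset.sum_mul_sq_le_sq_mul_sq Finset.univ a b

lemma dot_self_nonneg {k : ℕ} (x : Fin k → ℝ) : 0 ≤ x ⬝ᵥ x :=
  Finset.sum_nonneg fun _ _ => mul_self_nonneg _

lemma charpoly_eval {r : ℕ} (A : Matrix (Fin r) (Fin r) ℝ) (t : ℝ) :
    (A.charpoly).eval t = (t • (1 : Matrix (Fin r) (Fin r) ℝ) - A).det := by
  rw [Matrix.charpoly, eval_det, matPolyEquiv_charmatrix]
  congr 1
  ext i j
  by_cases h : i = j <;>
    simp [Matrix.scalar_apply, Matrix.smul_apply, Matrix.one_apply, Matrix.diagonal_apply,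
      Matrix.sub_apply, h]

lemma diag_le_one {r : ℕ} {M : Matrix (Fin r) (Fin r) ℝ}
    (hM : ((1 : Matrix (Fin r) (Fin r) ℝ) - Mᵀ * M).PosSemidef) (i : Fin r) :
    (Mᵀ * M) i i ≤ 1 := by
  have := hM.dotProduct_mulVec_nonneg (Pi.single i 1)
  simp only [Matrix.sub_mulVec, Matrix.one_mulVec, dotProduct_sub] at this
  have h1 : (Pi.single i 1 : Fin r → ℝ) ⬝ᵥ Pi.single i 1 = 1 := by
    simp [dotProduct, Pi.single_apply]
  have h2 : (Pi.single i 1 : Fin r → ℝ) ⬝ᵥ ((Mᵀ * M) *ᵥ Pi.single i 1) = (Mᵀ * M) i i := by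
    simp [Matrix.mulVec_single, dotProduct, Pi.single_apply]
  simp only [star_trivial] at this
  rw [h1, h2] at this
  linarith [this]

lemma abs_diag_le_one {r : ℕ} {M : Matrix (Fin r) (Fin r) ℝ}
    (hM : ((1 : Matrix (Fin r) (Fin r) ℝ) - Mᵀ * M).PosSemidef) (i : Fin r) :
    |M i i| ≤ 1 := by
  have h := diag_le_one hM i
  have h2 : (Mᵀ * M) i i = ∑ k, M k i ^ 2 := by
    simp [Matrix.mul_apply, pow_two]
  rw [h2] at h
  have h3 : M i i ^ 2 ≤ ∑ k, M k i ^ 2 :=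
    Finset.single_le_sum (f := fun k => M k i ^ 2) (fun k _ => sq_nonneg _) (Finset.mem_univ i)
  nlinarith [abs_nonneg (M i i), sq_abs (M i i)]

lemma polar_trace_invertible {r : ℕ} (B : Matrix (Fin r) (Fin r) ℝ) (c : ℝ)
    (hc : 0 < c) (hdet : IsUnit B.det)
    (hb : ((c ^ 2) • (1 : Matrix (Fin r) (Fin r) ℝ) - Bᵀ * B).PosSemidef) :
    ∃ Q : Matrix (Fin r) (Fin r) ℝ, Qᵀ * Q = 1 ∧ (Bᵀ * B).trace ≤ c * (Qᵀ * B).trace := by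
  have hct : ∀ (A : Matrix (Fin r) (Fin r) ℝ), Aᴴ = Aᵀ := fun A =>
    conjTranspose_eq_transpose_of_trivial A
  have hN : (Bᵀ * B).PosSemidef := by
    rw [← hct]; exact posSemidef_conjTranspose_mul_self B
  open scoped MatrixOrder in
  set S := CFC.sqrt (Bᵀ * B) with hSdef
  open scoped MatrixOrder in
  have hS : S.PosSemidef := Matrix.nonneg_iff_posSemidef.mp (CFC.sqrt_nonneg _)
  open scoped MatrixOrder in
  have hSS : S * S = Bᵀ * B := CFC.sqrt_mul_sqrt_self _ (Matrix.nonneg_iff_posSemidef.mpr hN)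
  have hSH : Sᵀ = S := by rw [← hct]; exact hS.isHermitian
  have hdetS : IsUnit S.det := by
    have h1 : S.det * S.det = B.det * B.det := by
      rw [← det_mul, hSS, det_mul, det_transpose]
    rw [isUnit_iff_ne_zero] at hdet ⊢
    intro h
    rw [h, mul_zero] at h1
    exact hdet (mul_self_eq_zero.mp h1.symm)
  have hQtB : (B * S⁻¹)ᵀ * B = S := by
    rw [transpose_mul, transpose_nonsing_inv, hSH, mul_assoc, ← hSS, ← mul_assoc,
      nonsing_inv_mul S hdetS, one_mul]
  refine ⟨B * S⁻¹, ?_, ?_⟩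
  · rw [transpose_mul, transpose_nonsing_inv, hSH, mul_assoc, ← mul_assoc Bᵀ, ← hSS,
      ← mul_assoc, ← mul_assoc, nonsing_inv_mul S hdetS, one_mul, mul_nonsing_inv S hdetS]
  · rw [hQtB, ← hSS]
    have σ : S.IsHermitian := hS.1
    set d : Fin r → ℝ := σ.eigenvalues with hd
    set V : Matrix (Fin r) (Fin r) ℝ := (σ.eigenvectorUnitary : Matrix (Fin r) (Fin r) ℝ)
      with hV
    have hVV : star V * V = 1 :=
      Matrix.mem_unitaryGroup_iff'.mp (σ.eigenvectorUnitary).2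
    have hVV' : V * star V = 1 :=
      Matrix.mem_unitaryGroup_iff.mp (σ.eigenvectorUnitary).2
    have hspec : S = V * diagonal d * star V := by
      have := σ.spectral_theorem
      simpa [hd, hV] using this
    have hSsq : S * S = V * (diagonal d * diagonal d) * star V := by
      conv_lhs => rw [hspec]
      calc (V * diagonal d * star V) * (V * diagonal d * star V)
          = V * diagonal d * (star V * V) * (diagonal d * star V) := by noncomm_ring
        _ = V * (diagonal d * diagonal d) * star V := by rw [hVV]; noncomm_ring
    have htrS : S.trace = ∑ i, d i := by
      rw [hspec, trace_mul_cycle, hVV, one_mul, trace_diagonal]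
    have htrSS : (S * S).trace = ∑ i, d i * d i := by
      rw [hSsq, trace_mul_cycle, hVV, one_mul, diagonal_mul_diagonal, trace_diagonal]
    have hd0 : ∀ i, 0 ≤ d i := fun i => hS.eigenvalues_nonneg i
    have hdc : ∀ i, d i * d i ≤ c ^ 2 := by
      have hpsd2 := hb.conjTranspose_mul_mul_same V
      have hcomp : Vᴴ * ((c ^ 2) • (1 : Matrix (Fin r) (Fin r) ℝ) - Bᵀ * B) * V
          = diagonal (fun i => c ^ 2 - d i * d i) := by
        have e1 : Vᴴ * ((c ^ 2) • (1 : Matrix (Fin r) (Fin r) ℝ) - Bᵀ * B) * V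
            = (c ^ 2) • (star V * V) - star V * (Bᵀ * B) * V := by
          rw [Matrix.mul_sub, Matrix.sub_mul, Matrix.mul_smul, Matrix.smul_mul, mul_one]
          simp [Matrix.star_eq_conjTranspose]
        have e2 : star V * (Bᵀ * B) * V = diagonal d * diagonal d := by
          rw [← hSS, hSsq]
          calc star V * (V * (diagonal d * diagonal d) * star V) * V
              = (star V * V) * (diagonal d * diagonal d) * (star V * V) := by noncomm_ring
            _ = diagonal d * diagonal d := by rw [hVV, one_mul, mul_one]
        rw [e1, e2, hVV, diagonal_mul_diagonal]
        ext i j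
        by_cases h : i = j <;>
          simp [Matrix.sub_apply, Matrix.smul_apply, Matrix.one_apply, Matrix.diagonal_apply, h]
      rw [hcomp] at hpsd2
      intro i
      have := (Matrix.posSemidef_diagonal_iff.mp hpsd2) i
      linarith
    have key : ∀ i, d i * d i ≤ c * d i := by
      intro i
      have h1 := hdc i
      have h2 := hd0 i
      nlinarith
    rw [htrS, htrSS, Finset.mul_sum]
    exact Finset.sum_le_sum fun i _ => key i

lemma approx_trace {r : ℕ} (M : Matrix (Fin r) (Fin r) ℝ)
    (hM : ((1 : Matrix (Fin r) (Fin r) ℝ) - Mᵀ * M).PosSemidef) {δ : ℝ} (hδ : 0 < δ) :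
    ∃ Q : Matrix (Fin r) (Fin r) ℝ, Qᵀ * Q = 1 ∧ (Mᵀ * M).trace ≤ (Qᵀ * M).trace + δ := by
  have hp : (-M).charpoly ≠ 0 := ((-M).charpoly_monic).ne_zero
  have hfin := Polynomial.finite_setOf_isRoot hp
  set a : ℝ := min 1 (δ / (5 * r + 1)) with ha
  have ha0 : 0 < a := lt_min one_pos (div_pos hδ (by positivity))
  obtain ⟨ε, hε⟩ := ((Set.Ioo_infinite ha0).diff hfin).nonempty
  obtain ⟨⟨hε0, hεa⟩, hεroot⟩ := hε
  have hε1 : ε ≤ 1 := le_of_lt (lt_of_lt_of_le hεa (min_le_left _ _))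
  have hεδ : ε * (5 * r + 1) ≤ δ := by
    have h1 : ε ≤ δ / (5 * r + 1) := le_of_lt (lt_of_lt_of_le hεa (min_le_right _ _))
    have h2 : (0:ℝ) < 5 * r + 1 := by positivity
    calc ε * (5 * r + 1) ≤ (δ / (5 * r + 1)) * (5 * r + 1) := by nlinarith
      _ = δ := by field_simp
  set B : Matrix (Fin r) (Fin r) ℝ := M + ε • 1 with hB
  have hdet : IsUnit B.det := by
    rw [isUnit_iff_ne_zero]
    intro h
    apply hεroot
    show ((-M).charpoly).IsRoot ε
    rw [Polynomial.IsRoot, charpoly_eval, sub_neg_eq_add]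
    rw [show ε • (1 : Matrix (Fin r) (Fin r) ℝ) + M = B by rw [hB, add_comm]]
    exact h
  have hMx : ∀ x : Fin r → ℝ, (M *ᵥ x) ⬝ᵥ (M *ᵥ x) ≤ x ⬝ᵥ x := by
    intro x
    have := hM.dotProduct_mulVec_nonneg x
    simp only [star_trivial, Matrix.sub_mulVec, Matrix.one_mulVec, dotProduct_sub] at this
    rw [qform] at this
    linarith
  have hb : ((1 + ε) ^ 2 • (1 : Matrix (Fin r) (Fin r) ℝ) - Bᵀ * B).PosSemidef := by
    refine Matrix.PosSemidef.of_dotProduct_mulVec_nonneg ?_ ?_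
    · have h1 : (Bᵀ * B).IsHermitian := by
        rw [← conjTranspose_eq_transpose_of_trivial]
        exact Matrix.isHermitian_conjTranspose_mul_self B
      unfold Matrix.IsHermitian at h1 ⊢
      rw [conjTranspose_sub, conjTranspose_smul, conjTranspose_one, h1]
      norm_num
    · intro x
      simp only [star_trivial, Matrix.sub_mulVec, Matrix.smul_mulVec, Matrix.one_mulVec,
        dotProduct_sub, dotProduct_smul]
      rw [qform]
      have hBx : B *ᵥ x = M *ᵥ x + ε • x := by
        rw [hB, Matrix.add_mulVec, Matrix.smul_mulVec, Matrix.one_mulVec]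
      rw [hBx]
      set u := M *ᵥ x
      have hexp : (u + ε • x) ⬝ᵥ (u + ε • x)
          = u ⬝ᵥ u + 2 * ε * (u ⬝ᵥ x) + ε ^ 2 * (x ⬝ᵥ x) := by
        rw [dotProduct_add, add_dotProduct, add_dotProduct, dotProduct_smul, smul_dotProduct,
          smul_dotProduct, dotProduct_smul, dotProduct_comm x u]
        simp [smul_eq_mul]
        ring
      rw [hexp]
      have h1 : u ⬝ᵥ u ≤ x ⬝ᵥ x := hMx x
      have h2 : u ⬝ᵥ x ≤ x ⬝ᵥ x := by
        have hcs := dot_sq_le u x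
        have hx0 := dot_self_nonneg x
        nlinarith [dot_self_nonneg u]
      have hx0 := dot_self_nonneg x
      simp only [smul_eq_mul]
      nlinarith
  obtain ⟨Q, hQ, hQle⟩ := polar_trace_invertible B (1 + ε) (by linarith) hdet hb
  refine ⟨Q, hQ, ?_⟩
  have hBexp : Bᵀ * B = Mᵀ * M + ε • Mᵀ + ε • M + (ε * ε) • (1 : Matrix (Fin r) (Fin r) ℝ) := by
    rw [hB, transpose_add, transpose_smul, transpose_one, add_mul, mul_add, mul_add,
      Matrix.smul_mul, Matrix.smul_mul, Matrix.mul_smul, Matrix.mul_smul, mul_one, one_mul,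
      smul_smul, mul_one]
    abel
  have hQB : Qᵀ * B = Qᵀ * M + ε • Qᵀ := by
    rw [hB, mul_add, Matrix.mul_smul, mul_one]
  have htrBB : (Bᵀ * B).trace
      = (Mᵀ * M).trace + 2 * ε * M.trace + ε ^ 2 * (r : ℝ) := by
    rw [hBexp, trace_add, trace_add, trace_add, trace_smul, trace_smul, trace_smul,
      trace_transpose, trace_one]
    simp [smul_eq_mul]
    ring
  have htrQB : (Qᵀ * B).trace = (Qᵀ * M).trace + ε * Q.trace := by
    rw [hQB, trace_add, trace_smul, trace_transpose]
    simp [smul_eq_mul]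
  rw [htrBB, htrQB] at hQle
  have hQpsd : ((1 : Matrix (Fin r) (Fin r) ℝ) - Qᵀ * Q).PosSemidef := by
    rw [hQ, sub_self]; exact Matrix.PosSemidef.zero
  have habsQ : |Q.trace| ≤ (r : ℝ) := by
    calc |Q.trace| ≤ ∑ i, |Q i i| := Finset.abs_sum_le_sum_abs _ _
      _ ≤ ∑ _i : Fin r, (1:ℝ) := Finset.sum_le_sum fun i _ => abs_diag_le_one hQpsd i
      _ = (r : ℝ) := by simp
  have habsM : |M.trace| ≤ (r : ℝ) := by
    calc |M.trace| ≤ ∑ i, |M i i| := Finset.abs_sum_le_sum_abs _ _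
      _ ≤ ∑ _i : Fin r, (1:ℝ) := Finset.sum_le_sum fun i _ => abs_diag_le_one hM i
      _ = (r : ℝ) := by simp
  have hs0 : 0 ≤ (Mᵀ * M).trace := by
    apply Finset.sum_nonneg
    intro i _
    show 0 ≤ (Mᵀ * M) i i
    rw [Matrix.mul_apply]
    exact Finset.sum_nonneg fun k _ => by
      simp only [Matrix.transpose_apply]; exact mul_self_nonneg _
  have hsr : (Mᵀ * M).trace ≤ (r : ℝ) := by
    calc (Mᵀ * M).trace = ∑ i, (Mᵀ * M) i i := rfl
      _ ≤ ∑ _i : Fin r, (1:ℝ) := Finset.sum_le_sum fun i _ => diag_le_one hM i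
      _ = (r : ℝ) := by simp
  set s := (Mᵀ * M).trace
  set t := (Qᵀ * M).trace
  set m := M.trace
  set q := Q.trace
  have hq1 : -(r:ℝ) ≤ q := neg_le_of_abs_le habsQ
  have hq2 : q ≤ (r:ℝ) := le_of_abs_le habsQ
  have hm1 : -(r:ℝ) ≤ m := neg_le_of_abs_le habsM
  have hm2 : m ≤ (r:ℝ) := le_of_abs_le habsM
  nlinarith [hQle, hε0, hε1, hεδ, hs0, hsr, hq1, hq2, hm1, hm2, mul_pos hε0 hε0]

lemma entry_mem_Icc {r : ℕ} {Q : Matrix (Fin r) (Fin r) ℝ} (hQ : Qᵀ * Q = 1)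
    (i j : Fin r) : Q i j ∈ Set.Icc (-1 : ℝ) 1 := by
  have h1 : (Qᵀ * Q) j j = 1 := by rw [hQ]; simp [Matrix.one_apply]
  rw [Matrix.mul_apply] at h1
  simp only [Matrix.transpose_apply] at h1
  have h2 : Q i j * Q i j ≤ 1 := by
    rw [← h1]
    exact Finset.single_le_sum (f := fun k => Q k j * Q k j)
      (fun k _ => mul_self_nonneg _) (Finset.mem_univ i)
  constructor <;> nlinarith

lemma exact_trace {r : ℕ} (M : Matrix (Fin r) (Fin r) ℝ)
    (hM : ((1 : Matrix (Fin r) (Fin r) ℝ) - Mᵀ * M).PosSemidef) :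
    ∃ Q : Matrix (Fin r) (Fin r) ℝ, Qᵀ * Q = 1 ∧ (Mᵀ * M).trace ≤ (Qᵀ * M).trace := by
  set K : Set (Matrix (Fin r) (Fin r) ℝ) := {Q | Qᵀ * Q = 1} with hK
  set f : Matrix (Fin r) (Fin r) ℝ → ℝ := fun Q => (Qᵀ * M).trace with hf
  have hfc : Continuous f :=
    ((continuous_id.matrix_transpose).matrix_mul continuous_const).matrix_trace
  have hKcl : IsClosed K := by
    have h : Continuous fun Q : Matrix (Fin r) (Fin r) ℝ => Qᵀ * Q :=
      (continuous_id.matrix_transpose).matrix_mul continuous_id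
    exact isClosed_singleton.preimage h
  have hKsub : K ⊆ Set.pi Set.univ fun _ : Fin r =>
      Set.pi Set.univ fun _ : Fin r => Set.Icc (-1 : ℝ) 1 := by
    intro Q hQ i _ j _
    exact entry_mem_Icc hQ i j
  have hScomp : IsCompact (Set.pi Set.univ fun _ : Fin r =>
      Set.pi Set.univ fun _ : Fin r => Set.Icc (-1 : ℝ) 1) :=
    isCompact_univ_pi fun _ => isCompact_univ_pi fun _ => isCompact_Icc
  have hKcomp : IsCompact K := hScomp.of_isClosed_subset hKcl hKsub
  have hKne : K.Nonempty := ⟨1, by simp [hK]⟩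
  obtain ⟨Q, hQK, hQmax⟩ := hKcomp.exists_isMaxOn hKne hfc.continuousOn
  refine ⟨Q, hQK, ?_⟩
  refine le_of_forall_pos_le_add fun δ hδ => ?_
  obtain ⟨Q', hQ', hle⟩ := approx_trace M hM hδ
  calc (Mᵀ * M).trace ≤ f Q' + δ := hle
    _ ≤ f Q + δ := by have := hQmax hQ'; simpa using add_le_add_right this δ

theorem stmt3 {n r : ℕ} (Ul U : Matrix (Fin n) (Fin r) ℝ)
    (hUl : Ulᵀ * Ul = 1) (hU : Uᵀ * U = 1) :
    ∃ Q : Matrix (Fin r) (Fin r) ℝ, Qᵀ * Q = 1 ∧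
      frobNorm (Ul - U * Q) ≤ frobNorm (Ul * Ulᵀ - U * Uᵀ) := by
  set M : Matrix (Fin r) (Fin r) ℝ := Uᵀ * Ul with hMdef
  -- M is a contraction
  have hM : ((1 : Matrix (Fin r) (Fin r) ℝ) - Mᵀ * M).PosSemidef := by
    refine Matrix.PosSemidef.of_dotProduct_mulVec_nonneg ?_ ?_
    · have h1 : (Mᵀ * M).IsHermitian := by
        rw [← conjTranspose_eq_transpose_of_trivial]
        exact Matrix.isHermitian_conjTranspose_mul_self M
      unfold Matrix.IsHermitian at h1 ⊢
      rw [conjTranspose_sub, conjTranspose_one, h1]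
    · intro x
      simp only [star_trivial, Matrix.sub_mulVec, Matrix.one_mulVec, dotProduct_sub]
      rw [qform]
      set y := Ul *ᵥ x with hy
      set z := Uᵀ *ᵥ y with hz
      have hMx : M *ᵥ x = z := by
        rw [hMdef, hz, hy, Matrix.mulVec_mulVec]
      rw [hMx]
      have hyy : y ⬝ᵥ y = x ⬝ᵥ x := by
        rw [hy, ← qform, hUl, Matrix.one_mulVec]
      set w := U *ᵥ z with hw
      have hzz : y ⬝ᵥ w = z ⬝ᵥ z := by
        rw [hw, hz, Matrix.mulVec_mulVec, ← qform Uᵀ y, transpose_transpose,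
          Matrix.mulVec_mulVec]
      have hww : w ⬝ᵥ w = z ⬝ᵥ z := by
        rw [hw, ← qform U z, hU, Matrix.one_mulVec]
      have hcs := dot_sq_le y w
      have hz0 := dot_self_nonneg z
      have hy0 := dot_self_nonneg y
      rw [hzz, hww] at hcs
      have : z ⬝ᵥ z ≤ y ⬝ᵥ y := by nlinarith
      rw [hyy] at this
      linarith
  obtain ⟨Q, hQ, hle⟩ := exact_trace M hM
  refine ⟨Q, hQ, ?_⟩
  rw [frobNorm_eq_sqrt_trace, frobNorm_eq_sqrt_trace]
  apply Real.sqrt_le_sqrt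
  -- trace computations
  have g1 : ((Ul - U * Q)ᵀ * (Ul - U * Q)).trace = 2 * (r : ℝ) - 2 * (Qᵀ * M).trace := by
    have e : (Ul - U * Q)ᵀ * (Ul - U * Q)
        = Ulᵀ * Ul - Ulᵀ * (U * Q) - ((U * Q)ᵀ * Ul - (U * Q)ᵀ * (U * Q)) := by
      rw [transpose_sub, Matrix.sub_mul, Matrix.mul_sub, Matrix.mul_sub]
    rw [e, trace_sub, trace_sub, trace_sub, hUl, trace_one]
    have t4 : ((U * Q)ᵀ * (U * Q)).trace = (r : ℝ) := by
      rw [show (U * Q)ᵀ * (U * Q) = Qᵀ * ((Uᵀ * U) * Q) by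
          rw [transpose_mul]; simp only [Matrix.mul_assoc],
        hU, Matrix.one_mul, hQ, trace_one]
      simp
    have t2 : (Ulᵀ * (U * Q)).trace = (Qᵀ * M).trace := by
      rw [← trace_transpose (Ulᵀ * (U * Q)), transpose_mul, transpose_mul, transpose_transpose,
        Matrix.mul_assoc, hMdef]
    have t3 : ((U * Q)ᵀ * Ul).trace = (Qᵀ * M).trace := by
      rw [transpose_mul, Matrix.mul_assoc, hMdef]
    rw [t4, t2, t3]
    simp
    ring
  have g2 : ((Ul * Ulᵀ - U * Uᵀ)ᵀ * (Ul * Ulᵀ - U * Uᵀ)).trace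
      = 2 * (r : ℝ) - 2 * (Mᵀ * M).trace := by
    have htr : (Ul * Ulᵀ - U * Uᵀ)ᵀ = Ul * Ulᵀ - U * Uᵀ := by
      rw [transpose_sub, transpose_mul, transpose_mul, transpose_transpose,
        transpose_transpose]
    have e : (Ul * Ulᵀ - U * Uᵀ) * (Ul * Ulᵀ - U * Uᵀ)
        = (Ul * Ulᵀ) * (Ul * Ulᵀ) - (Ul * Ulᵀ) * (U * Uᵀ)
          - ((U * Uᵀ) * (Ul * Ulᵀ) - (U * Uᵀ) * (U * Uᵀ)) := by
      rw [Matrix.sub_mul, Matrix.mul_sub, Matrix.mul_sub]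
    have c1 : (Ul * Ulᵀ) * (Ul * Ulᵀ) = Ul * Ulᵀ := by
      rw [show (Ul * Ulᵀ) * (Ul * Ulᵀ) = Ul * ((Ulᵀ * Ul) * Ulᵀ) by
          simp only [Matrix.mul_assoc], hUl, Matrix.one_mul]
    have c2 : (U * Uᵀ) * (U * Uᵀ) = U * Uᵀ := by
      rw [show (U * Uᵀ) * (U * Uᵀ) = U * ((Uᵀ * U) * Uᵀ) by
          simp only [Matrix.mul_assoc], hU, Matrix.one_mul]
    have hMt : Mᵀ * M = (Ulᵀ * U) * (Uᵀ * Ul) := by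
      rw [hMdef, transpose_mul, transpose_transpose]
    have c3 : ((Ul * Ulᵀ) * (U * Uᵀ)).trace = (Mᵀ * M).trace := by
      rw [show (Ul * Ulᵀ) * (U * Uᵀ) = Ul * (Ulᵀ * (U * Uᵀ)) by simp only [Matrix.mul_assoc],
        trace_mul_comm,
        show Ulᵀ * (U * Uᵀ) * Ul = (Ulᵀ * U) * (Uᵀ * Ul) by simp only [Matrix.mul_assoc], hMt]
    have c4 : ((U * Uᵀ) * (Ul * Ulᵀ)).trace = (Mᵀ * M).trace := by
      rw [show (U * Uᵀ) * (Ul * Ulᵀ) = U * (Uᵀ * (Ul * Ulᵀ)) by simp only [Matrix.mul_assoc],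
        trace_mul_comm,
        show Uᵀ * (Ul * Ulᵀ) * U = (Uᵀ * Ul) * (Ulᵀ * U) by simp only [Matrix.mul_assoc],
        trace_mul_comm, hMt]
    have c5 : (Ul * Ulᵀ).trace = (r : ℝ) := by
      rw [trace_mul_comm, hUl, trace_one]; simp
    have c6 : (U * Uᵀ).trace = (r : ℝ) := by
      rw [trace_mul_comm, hU, trace_one]; simp
    rw [htr, e, trace_sub, trace_sub, trace_sub, c1, c2, c3, c4, c5, c6]
    ring
  rw [g1, g2]
  linarith
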